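/- Let P be a finite p-group, let Q < P be a proper subgroup of P, and let ψ ∈ Irr(P). Suppose the restriction ψ_Q decomposes as ψ_Q = Σ_{i=1}^{k} n_i φ_i, where φ_1, ..., φ_k are pairwise distinct irreducible characters of Q and n_i = (ψ_Q, φ_i) > 0 for each i = 1, ..., k. Then there exists a finite p-group G with irreducible characters Ψ, Θ ∈ Irr(G) such that ΨΘ = Σ_{i=1}^{k} n_i Φ_i, where Φ_1, ..., Φ_k are pairwise distinct irreducible characters of G and n_i = (ΨΘ, Φ_i) > 0 for each i = 1, ..., k. -/

import Mathlib

/-- `χ : G → ℂ` is a (complex) character of `G`: the trace function of some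
finite-dimensional complex representation of `G`. -/
def IsChar (G : Type*) [Group G] (χ : G → ℂ) : Prop :=
  ∃ (n : ℕ) (ρ : Representation ℂ G (Fin n → ℂ)),
    ∀ g : G, χ g = LinearMap.trace ℂ (Fin n → ℂ) (ρ g)

/-- The usual inner product of class functions on a finite group. -/
noncomputable def cInner (G : Type*) [Group G] [Finite G] (χ φ : G → ℂ) : ℂ :=
  (Nat.card G : ℂ)⁻¹ * ∑ᶠ g : G, χ g * (starRingEnd ℂ) (φ g)

/-- `χ` is an irreducible character of the finite group `G`. -/
def IsIrrChar (G : Type*) [Group G] [Finite G] (χ : G → ℂ) : Prop :=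
  IsChar G χ ∧ cInner G χ χ = 1

open scoped Classical in
/-- The induced character `χ^G` of a character `χ` of a subgroup `H ≤ G`. -/
noncomputable def inducedChar {G : Type*} [Group G] [Finite G]
    (H : Subgroup G) (χ : ↥H → ℂ) : G → ℂ :=
  fun g => (Nat.card H : ℂ)⁻¹ *
    ∑ᶠ x : G, if h : x⁻¹ * g * x ∈ H then χ ⟨x⁻¹ * g * x, h⟩ else 0

namespace ThmB

section Helpers

lemma trace_pi {ι : Type} [Fintype ι] [DecidableEq ι] (f : (ι → ℂ) →ₗ[ℂ] (ι → ℂ)) :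
    LinearMap.trace ℂ (ι → ℂ) f = ∑ i, f (Pi.single i 1) i := by
  rw [LinearMap.trace_eq_matrix_trace ℂ (Pi.basisFun ℂ ι)]
  simp [Matrix.trace, Matrix.diag, LinearMap.toMatrix_apply]

lemma isChar_of_rep {H : Type} [Group H] {ι : Type} [Fintype ι]
    (ρ : Representation ℂ H (ι → ℂ)) :
    IsChar H (fun g => LinearMap.trace ℂ (ι → ℂ) (ρ g)) := by
  set E : (ι → ℂ) ≃ₗ[ℂ] (Fin (Fintype.card ι) → ℂ) :=
    LinearEquiv.funCongrLeft ℂ ℂ (Fintype.equivFin ι).symm with hE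
  refine ⟨Fintype.card ι,
    { toFun := fun g => E.conj (ρ g),
      map_one' := by
        refine LinearMap.ext fun f => ?_
        show E.conj (ρ 1) f = (1 : Module.End ℂ _) f
        rw [map_one ρ]
        simp [LinearEquiv.conj_apply, Module.End.one_apply]
      map_mul' := fun g h => by
        refine LinearMap.ext fun f => ?_
        show E.conj (ρ (g * h)) f = (E.conj (ρ g) * E.conj (ρ h)) f
        rw [map_mul ρ g h]
        simp [LinearEquiv.conj_apply, Module.End.mul_apply] }, fun g => ?_⟩
  exact (LinearMap.trace_conj' (ρ g) E).symm

lemma isChar_conj {H : Type*} [Group H] {χ : H → ℂ} (hχ : IsChar H χ) (y g : H) :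
    χ (y⁻¹ * g * y) = χ g := by
  obtain ⟨n, ρ, hρ⟩ := hχ
  rw [hρ, hρ]
  have h1 : ρ (y⁻¹ * g * y) = ρ y⁻¹ * (ρ g * ρ y) := by
    rw [← map_mul, ← map_mul, mul_assoc]
  rw [h1, LinearMap.trace_mul_comm, mul_assoc, ← map_mul, mul_inv_cancel, map_one, mul_one]

lemma sum_dite_mem {M : Type*} [AddCommMonoid M] {P : Type} [Group P] [Fintype P]
    (Q : Subgroup P) [DecidablePred (· ∈ Q)] (f : ↥Q → M) :
    (∑ g : P, if h : g ∈ Q then f ⟨g, h⟩ else 0) = ∑ q : ↥Q, f q := by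
  rw [← Fintype.sum_subtype_add_sum_subtype (· ∈ Q) (fun g => if h : g ∈ Q then f ⟨g, h⟩ else 0)]
  have h1 : ∀ i : {x : P // x ∈ Q}, (if h : (i : P) ∈ Q then f ⟨i, h⟩ else 0) = f i :=
    fun i => by rw [dif_pos i.2]
  have h2 : ∀ i : {x : P // ¬x ∈ Q}, (if h : (i : P) ∈ Q then f ⟨i, h⟩ else 0) = 0 :=
    fun i => dif_neg i.2
  simp only [h1, h2, Finset.sum_const_zero, add_zero]

end Helpers


open scoped Classical

variable (p : ℕ) (P : Type) [Group P] (Q : Subgroup P)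

abbrev NN : Type := (P ⧸ Q) → Multiplicative (ZMod p)

def actN (g : P) : MulAut (NN p P Q) where
  toFun v := fun x => v (g⁻¹ • x)
  invFun v := fun x => v (g • x)
  left_inv v := by funext x; simp
  right_inv v := by funext x; simp
  map_mul' v w := rfl

def phiP : P →* MulAut (NN p P Q) where
  toFun := actN p P Q
  map_one' := by ext v x; simp [actN]
  map_mul' g h := by ext v x; simp [actN, mul_smul]

abbrev GG : Type := NN p P Q ⋊[phiP p P Q] P

def gEquiv : GG p P Q ≃ (NN p P Q) × P where
  toFun s := (s.left, s.right)
  invFun q := ⟨q.1, q.2⟩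
  left_inv s := rfl
  right_inv q := rfl

instance [NeZero p] [Finite P] : Finite (GG p P Q) :=
  Finite.of_equiv _ (gEquiv p P Q).symm

noncomputable def zeta : ℂ := Complex.exp (2 * Real.pi * Complex.I / p)

noncomputable def eC : Multiplicative (ZMod p) → ℂ :=
  fun a => zeta p ^ (Multiplicative.toAdd a).val

variable {p}

lemma zeta_pow_p (hp : p.Prime) : zeta p ^ p = 1 :=
  (Complex.isPrimitiveRoot_exp p hp.ne_zero).pow_eq_one

lemma zeta_ne_one (hp : p.Prime) : zeta p ≠ 1 :=
  (Complex.isPrimitiveRoot_exp p hp.ne_zero).ne_one hp.one_lt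

lemma zeta_ne_zero : zeta p ≠ 0 := Complex.exp_ne_zero _

lemma conj_zeta (hp : p.Prime) : (starRingEnd ℂ) (zeta p) = (zeta p)⁻¹ := by
  unfold zeta
  rw [← Complex.exp_conj, ← Complex.exp_neg]
  congr 1
  simp [map_div₀, Complex.conj_I, map_ofNat]
  ring

lemma zeta_pow_mod (hp : p.Prime) (m : ℕ) : zeta p ^ (m % p) = zeta p ^ m := by
  conv_rhs => rw [← Nat.div_add_mod m p]
  rw [pow_add, pow_mul, zeta_pow_p hp, one_pow, one_mul]

variable (hp : p.Prime)

lemma eC_mul (hp : p.Prime) (a b : Multiplicative (ZMod p)) :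
    eC p (a * b) = eC p a * eC p b := by
  haveI : NeZero p := ⟨hp.ne_zero⟩
  unfold eC
  rw [← pow_add]
  have : Multiplicative.toAdd (a * b) = Multiplicative.toAdd a + Multiplicative.toAdd b := rfl
  rw [this, ZMod.val_add, zeta_pow_mod hp]

lemma eC_one : eC p (1 : Multiplicative (ZMod p)) = 1 := by
  unfold eC
  have : Multiplicative.toAdd (1 : Multiplicative (ZMod p)) = 0 := rfl
  rw [this]
  simp [ZMod.val_zero]


lemma conj_eC (hp : p.Prime) (a : Multiplicative (ZMod p)) :
    (starRingEnd ℂ) (eC p a) = eC p a⁻¹ := by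
  have h1 : eC p a * eC p a⁻¹ = 1 := by
    rw [← eC_mul hp, mul_inv_cancel, eC_one]
  have h2 : (starRingEnd ℂ) (eC p a) = (eC p a)⁻¹ := by
    unfold eC
    rw [map_pow, conj_zeta hp, inv_pow]
  rw [h2, inv_eq_of_mul_eq_one_right h1]

lemma eC_mul_conj (hp : p.Prime) (a : Multiplicative (ZMod p)) :
    eC p a * (starRingEnd ℂ) (eC p a) = 1 := by
  rw [conj_eC hp, ← eC_mul hp, mul_inv_cancel, eC_one]

lemma keySum (hp : p.Prime) [Finite P] (x y : P ⧸ Q) :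
    ∑ᶠ v : NN p P Q, eC p (v x) * (starRingEnd ℂ) (eC p (v y)) =
      if x = y then (Nat.card (NN p P Q) : ℂ) else 0 := by
  haveI : NeZero p := ⟨hp.ne_zero⟩
  letI : Fintype (P ⧸ Q) := Fintype.ofFinite _
  letI : Fintype (NN p P Q) := Fintype.ofFinite _
  rw [finsum_eq_sum_of_fintype]
  split_ifs with h
  · subst h
    have : ∀ v : NN p P Q, eC p (v x) * (starRingEnd ℂ) (eC p (v x)) = 1 :=
      fun v => eC_mul_conj hp _
    simp only [this, Finset.sum_const, Finset.card_univ, nsmul_eq_mul, mul_one,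
      Nat.card_eq_fintype_card]
  · set F : NN p P Q → ℂ := fun v => eC p (v x) * (starRingEnd ℂ) (eC p (v y)) with hF
    set δ : NN p P Q := Pi.mulSingle x (Multiplicative.ofAdd (1 : ZMod p)) with hδ
    have key : ∀ v : NN p P Q, F (δ * v) = zeta p * F v := by
      intro v
      have hx : (δ * v) x = Multiplicative.ofAdd (1 : ZMod p) * v x := by
        simp [hδ, Pi.mul_apply]
      have hy : (δ * v) y = v y := by
        simp [hδ, Pi.mul_apply, Pi.mulSingle_eq_of_ne (Ne.symm h)]
      have he1 : eC p (Multiplicative.ofAdd (1 : ZMod p)) = zeta p := by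
        unfold eC
        rw [toAdd_ofAdd, ZMod.val_one_eq_one_mod]
        rw [Nat.mod_eq_of_lt hp.one_lt, pow_one]
      rw [hF]
      simp only [hx, hy, eC_mul hp, he1]
      ring
    have hS : ∑ v : NN p P Q, F v = zeta p * ∑ v : NN p P Q, F v := by
      calc ∑ v : NN p P Q, F v
          = ∑ v : NN p P Q, F (δ * v) := by
            refine (Fintype.sum_equiv (Equiv.mulLeft δ) _ _ fun v => rfl).symm
        _ = ∑ v : NN p P Q, zeta p * F v := by simp only [key]
        _ = zeta p * ∑ v : NN p P Q, F v := by rw [Finset.mul_sum]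
    have hz : (zeta p - 1) * ∑ v : NN p P Q, F v = 0 := by
      rw [sub_mul, one_mul, ← hS, sub_self]
    rcases mul_eq_zero.mp hz with h' | h'
    · exact absurd (sub_eq_zero.mp h') (zeta_ne_one hp)
    · exact h'

lemma c_mem (g : P) (x : P ⧸ Q) : x.out⁻¹ * g * (g⁻¹ • x).out ∈ Q := by
  have h1 : (QuotientGroup.mk ((g⁻¹ • x).out) : P ⧸ Q) = g⁻¹ • x :=
    QuotientGroup.out_eq' _
  have h2 : (QuotientGroup.mk (g • (g⁻¹ • x).out) : P ⧸ Q) = x := by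
    rw [← MulAction.Quotient.smul_mk, h1, smul_inv_smul]
  have h3 : (QuotientGroup.mk x.out : P ⧸ Q) = QuotientGroup.mk (g • (g⁻¹ • x).out) := by
    rw [h2, QuotientGroup.out_eq']
  have h4 := QuotientGroup.eq.mp h3
  simpa [smul_eq_mul, mul_assoc] using h4

lemma mem_iff_fix (g : P) (x : P ⧸ Q) : x.out⁻¹ * g * x.out ∈ Q ↔ g • x = x := by
  have h1 : x.out⁻¹ * g * x.out ∈ Q ↔
      (QuotientGroup.mk x.out : P ⧸ Q) = QuotientGroup.mk (g * x.out) := by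
    rw [QuotientGroup.eq]
    constructor
    · intro h; simpa [mul_assoc] using h
    · intro h; simpa [mul_assoc] using h
  rw [h1]
  have h2 : (QuotientGroup.mk (g * x.out) : P ⧸ Q) = g • x := by
    rw [← smul_eq_mul, ← MulAction.Quotient.smul_mk, QuotientGroup.out_eq']
  rw [h2, QuotientGroup.out_eq', eq_comm]

lemma inv_fix_iff (g : P) (x : P ⧸ Q) : g⁻¹ • x = x ↔ g • x = x := by
  rw [inv_smul_eq_iff, eq_comm]


variable (p)

/-- The element `out(x)⁻¹ g out(g⁻¹ • x)` of `Q`. -/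
noncomputable def cE (g : P) (x : P ⧸ Q) : ↥Q := ⟨x.out⁻¹ * g * (g⁻¹ • x).out, c_mem P Q g x⟩

lemma cE_one (x : P ⧸ Q) : cE P Q 1 x = 1 := by
  apply Subtype.ext
  simp [cE]

lemma cE_mul (g h : P) (x : P ⧸ Q) :
    cE P Q (g * h) x = cE P Q g x * cE P Q h (g⁻¹ • x) := by
  apply Subtype.ext
  show x.out⁻¹ * (g * h) * ((g * h)⁻¹ • x).out =
    (x.out⁻¹ * g * (g⁻¹ • x).out) * ((g⁻¹ • x).out⁻¹ * h * (h⁻¹ • g⁻¹ • x).out)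
  have h1 : (g * h)⁻¹ • x = h⁻¹ • g⁻¹ • x := by rw [mul_inv_rev, mul_smul]
  rw [h1]
  group

lemma cE_fix (g : P) (x : P ⧸ Q) (hfix : g⁻¹ • x = x) :
    (cE P Q g x : P) = x.out⁻¹ * g * x.out := by
  show x.out⁻¹ * g * (g⁻¹ • x).out = _
  rw [hfix]

/-- The character of the induced representation construction. -/
noncomputable def PhiChar (α : ↥Q → ℂ) : GG p P Q → ℂ := fun s =>
  ∑ᶠ x : P ⧸ Q, if h : x.out⁻¹ * s.right * x.out ∈ Q
    then eC p (s.left x) * α ⟨x.out⁻¹ * s.right * x.out, h⟩ else 0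

noncomputable def indRepMap {d : ℕ} (σ : Representation ℂ ↥Q (Fin d → ℂ)) (s : GG p P Q) :
    ((P ⧸ Q) × Fin d → ℂ) →ₗ[ℂ] ((P ⧸ Q) × Fin d → ℂ) where
  toFun f := fun q =>
    eC p (s.left q.1) * σ (cE P Q s.right q.1) (fun j => f (s.right⁻¹ • q.1, j)) q.2
  map_add' f g := by
    funext q
    show eC p (s.left q.1) * (σ (cE P Q s.right q.1))
        ((fun j => f (s.right⁻¹ • q.1, j)) + (fun j => g (s.right⁻¹ • q.1, j))) q.2
      = eC p (s.left q.1) * (σ (cE P Q s.right q.1)) (fun j => f (s.right⁻¹ • q.1, j)) q.2 +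
        eC p (s.left q.1) * (σ (cE P Q s.right q.1)) (fun j => g (s.right⁻¹ • q.1, j)) q.2
    rw [map_add, Pi.add_apply]
    ring
  map_smul' c f := by
    funext q
    show eC p (s.left q.1) * (σ (cE P Q s.right q.1))
        (c • fun j => f (s.right⁻¹ • q.1, j)) q.2
      = c * (eC p (s.left q.1) * (σ (cE P Q s.right q.1)) (fun j => f (s.right⁻¹ • q.1, j)) q.2)
    rw [map_smul, Pi.smul_apply, smul_eq_mul]
    ring

noncomputable def indRep (hp : p.Prime) {d : ℕ} (σ : Representation ℂ ↥Q (Fin d → ℂ)) :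
    Representation ℂ (GG p P Q) ((P ⧸ Q) × Fin d → ℂ) where
  toFun := indRepMap p P Q σ
  map_one' := by
    refine LinearMap.ext fun f => ?_
    funext q
    show eC p ((1 : GG p P Q).left q.1) *
      σ (cE P Q (1 : GG p P Q).right q.1)
        (fun j => f ((1 : GG p P Q).right⁻¹ • q.1, j)) q.2 = (1 : Module.End ℂ _) f q
    rw [SemidirectProduct.one_left, SemidirectProduct.one_right]
    rw [Pi.one_apply, eC_one, cE_one, map_one]
    simp
  map_mul' s t := by
    refine LinearMap.ext fun f => ?_
    funext q
    show eC p ((s * t).left q.1) *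
        σ (cE P Q (s * t).right q.1) (fun j => f ((s * t).right⁻¹ • q.1, j)) q.2 =
      eC p (s.left q.1) * σ (cE P Q s.right q.1)
        (fun j => indRepMap p P Q σ t f (s.right⁻¹ • q.1, j)) q.2
    have harg : (fun j => indRepMap p P Q σ t f (s.right⁻¹ • q.1, j)) =
        eC p (t.left (s.right⁻¹ • q.1)) •
          σ (cE P Q t.right (s.right⁻¹ • q.1))
            (fun j' => f (t.right⁻¹ • s.right⁻¹ • q.1, j')) := by
      funext j
      show eC p (t.left (s.right⁻¹ • q.1)) * _ = _
      rw [Pi.smul_apply, smul_eq_mul]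
    rw [harg, map_smul, SemidirectProduct.mul_left, SemidirectProduct.mul_right]
    have hleft : (s.left * (phiP p P Q) s.right t.left) q.1 =
        s.left q.1 * t.left (s.right⁻¹ • q.1) := rfl
    rw [hleft, eC_mul hp, cE_mul, map_mul]
    have harg2 : (s.right * t.right)⁻¹ • q.1 = t.right⁻¹ • s.right⁻¹ • q.1 := by
      rw [mul_inv_rev, mul_smul]
    rw [harg2]
    simp only [Pi.smul_apply, smul_eq_mul, Module.End.mul_apply]
    ring

lemma trace_indRep [Finite P] (hp : p.Prime) {d : ℕ}
    (σ : Representation ℂ ↥Q (Fin d → ℂ)) (s : GG p P Q) :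
    LinearMap.trace ℂ _ (indRep p P Q hp σ s) =
      PhiChar p P Q (fun q => LinearMap.trace ℂ (Fin d → ℂ) (σ q)) s := by
  classical
  letI : Fintype (P ⧸ Q) := Fintype.ofFinite _
  rw [trace_pi]
  show _ = ∑ᶠ x : P ⧸ Q, if h : x.out⁻¹ * s.right * x.out ∈ Q
    then eC p (s.left x) * LinearMap.trace ℂ (Fin d → ℂ) (σ ⟨x.out⁻¹ * s.right * x.out, h⟩) else 0
  rw [finsum_eq_sum_of_fintype, Fintype.sum_prod_type]
  refine Finset.sum_congr rfl fun x _ => ?_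
  by_cases hfix : s.right⁻¹ • x = x
  · have hmem : x.out⁻¹ * s.right * x.out ∈ Q :=
      (mem_iff_fix P Q s.right x).mpr ((inv_fix_iff P Q s.right x).mp hfix)
    rw [dif_pos hmem]
    have hc : cE P Q s.right x = ⟨x.out⁻¹ * s.right * x.out, hmem⟩ :=
      Subtype.ext (cE_fix P Q s.right x hfix)
    have hterm : ∀ j : Fin d, (indRep p P Q hp σ s) (Pi.single (x, j) (1:ℂ)) (x, j)
        = eC p (s.left x) * (σ ⟨x.out⁻¹ * s.right * x.out, hmem⟩) (Pi.single j 1) j := by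
      intro j
      show eC p (s.left x) * (σ (cE P Q s.right x))
          (fun j' => (Pi.single (x, j) (1:ℂ) : (P ⧸ Q) × Fin d → ℂ) (s.right⁻¹ • x, j')) j = _
      rw [hc]
      have hl : (fun j' => (Pi.single (x, j) (1:ℂ) : (P ⧸ Q) × Fin d → ℂ) (s.right⁻¹ • x, j')) = Pi.single j 1 := by
        funext j'
        rw [hfix]
        simp [Pi.single_apply, Prod.ext_iff]
      rw [hl]
    rw [Finset.sum_congr rfl (fun j _ => hterm j), ← Finset.mul_sum, trace_pi]
  · have hmem : ¬(x.out⁻¹ * s.right * x.out ∈ Q) := fun h =>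
      hfix ((inv_fix_iff P Q s.right x).mpr ((mem_iff_fix P Q s.right x).mp h))
    rw [dif_neg hmem]
    have hterm : ∀ j : Fin d, (indRep p P Q hp σ s) (Pi.single (x, j) (1:ℂ)) (x, j) = 0 := by
      intro j
      show eC p (s.left x) * (σ (cE P Q s.right x))
          (fun j' => (Pi.single (x, j) (1:ℂ) : (P ⧸ Q) × Fin d → ℂ) (s.right⁻¹ • x, j')) j = 0
      have hl : (fun j' => (Pi.single (x, j) (1:ℂ) : (P ⧸ Q) × Fin d → ℂ) (s.right⁻¹ • x, j')) = 0 := by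
        funext j'
        simp only [Pi.single_apply, Prod.ext_iff, Pi.zero_apply]
        rw [if_neg]
        rintro ⟨h1, -⟩
        exact hfix h1
      rw [hl, map_zero]
      simp
    simp [hterm]


variable {p} in
lemma phi_isometry [NeZero p] [Finite P] (hp : p.Prime) (α β : ↥Q → ℂ) :
    cInner (GG p P Q) (PhiChar p P Q α) (PhiChar p P Q β) = cInner ↥Q α β := by
  classical
  haveI : NeZero p := ⟨hp.ne_zero⟩
  letI : Fintype P := Fintype.ofFinite P
  letI : Fintype (P ⧸ Q) := Fintype.ofFinite _
  letI : Fintype (NN p P Q) := Fintype.ofFinite _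
  letI : Fintype (GG p P Q) := Fintype.ofFinite _
  set T := P ⧸ Q
  set Df : (↥Q → ℂ) → P → T → ℂ := fun γ g x =>
    if h : x.out⁻¹ * g * x.out ∈ Q then γ ⟨x.out⁻¹ * g * x.out, h⟩ else 0 with hDf
  have hPhi : ∀ (γ : ↥Q → ℂ) (v : NN p P Q) (g : P),
      PhiChar p P Q γ ⟨v, g⟩ = ∑ x : T, eC p (v x) * Df γ g x := by
    intro γ v g
    show ∑ᶠ x : T, _ = _
    rw [finsum_eq_sum_of_fintype]
    refine Finset.sum_congr rfl fun x _ => ?_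
    by_cases h : x.out⁻¹ * g * x.out ∈ Q
    · rw [dif_pos h, hDf]; simp only [dif_pos h]
    · rw [dif_neg h, hDf]; simp only [dif_neg h, mul_zero]
  have key' : ∀ x y : T, (∑ v : NN p P Q, eC p (v x) * (starRingEnd ℂ) (eC p (v y)))
      = if x = y then (Nat.card (NN p P Q) : ℂ) else 0 := by
    intro x y
    rw [← finsum_eq_sum_of_fintype]
    exact keySum P Q hp x y
  -- expand cInner over GG
  unfold cInner
  simp only [finsum_eq_sum_of_fintype]
  have hsumG : ∀ F : GG p P Q → ℂ, ∑ s : GG p P Q, F s = ∑ v : NN p P Q, ∑ g : P, F ⟨v, g⟩ := by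
    intro F
    have he := Fintype.sum_equiv (gEquiv p P Q) F (fun q => F ⟨q.1, q.2⟩) (fun s => rfl)
    rw [he, Fintype.sum_prod_type]
  rw [hsumG]
  have hmain : ∑ v : NN p P Q, ∑ g : P,
      PhiChar p P Q α ⟨v, g⟩ * (starRingEnd ℂ) (PhiChar p P Q β ⟨v, g⟩)
      = (Nat.card (NN p P Q) : ℂ) * ∑ g : P, ∑ x : T, Df α g x * (starRingEnd ℂ) (Df β g x) := by
    rw [Finset.sum_comm, Finset.mul_sum]
    refine Finset.sum_congr rfl fun g _ => ?_
    have h1 : ∀ v : NN p P Q,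
        PhiChar p P Q α ⟨v, g⟩ * (starRingEnd ℂ) (PhiChar p P Q β ⟨v, g⟩)
        = ∑ x : T, ∑ y : T, (Df α g x * (starRingEnd ℂ) (Df β g y)) *
            (eC p (v x) * (starRingEnd ℂ) (eC p (v y))) := by
      intro v
      rw [hPhi, hPhi, map_sum, Finset.sum_mul_sum]
      refine Finset.sum_congr rfl fun x _ => Finset.sum_congr rfl fun y _ => ?_
      rw [map_mul]
      ring
    calc ∑ v : NN p P Q, PhiChar p P Q α ⟨v, g⟩ * (starRingEnd ℂ) (PhiChar p P Q β ⟨v, g⟩)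
        = ∑ v : NN p P Q, ∑ x : T, ∑ y : T, (Df α g x * (starRingEnd ℂ) (Df β g y)) *
            (eC p (v x) * (starRingEnd ℂ) (eC p (v y))) := Finset.sum_congr rfl fun v _ => h1 v
      _ = ∑ x : T, ∑ y : T, (Df α g x * (starRingEnd ℂ) (Df β g y)) *
            ∑ v : NN p P Q, eC p (v x) * (starRingEnd ℂ) (eC p (v y)) := by
          rw [Finset.sum_comm]
          refine Finset.sum_congr rfl fun x _ => ?_
          rw [Finset.sum_comm]
          refine Finset.sum_congr rfl fun y _ => ?_
          rw [Finset.mul_sum]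
      _ = ∑ x : T, ∑ y : T, (Df α g x * (starRingEnd ℂ) (Df β g y)) *
            (if x = y then (Nat.card (NN p P Q) : ℂ) else 0) := by
          refine Finset.sum_congr rfl fun x _ => Finset.sum_congr rfl fun y _ => ?_
          rw [key']
      _ = ∑ x : T, (Df α g x * (starRingEnd ℂ) (Df β g x)) * (Nat.card (NN p P Q) : ℂ) := by
          refine Finset.sum_congr rfl fun x _ => ?_
          rw [Finset.sum_eq_single x]
          · rw [if_pos rfl]
          · intro y _ hy
            rw [if_neg (Ne.symm hy), mul_zero]
          · intro hx
            exact absurd (Finset.mem_univ x) hx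
      _ = (Nat.card (NN p P Q) : ℂ) * ∑ x : T, Df α g x * (starRingEnd ℂ) (Df β g x) := by
          rw [Finset.mul_sum]
          refine Finset.sum_congr rfl fun x _ => ?_
          ring
  rw [hmain]
  -- now per-x sum over g equals sum over ↥Q
  have hx : ∀ x : T, ∑ g : P, Df α g x * (starRingEnd ℂ) (Df β g x)
      = ∑ q : ↥Q, α q * (starRingEnd ℂ) (β q) := by
    intro x
    have h2 : ∀ g : P, Df α g x * (starRingEnd ℂ) (Df β g x)
        = (fun h : P => if hh : h ∈ Q then α ⟨h, hh⟩ * (starRingEnd ℂ) (β ⟨h, hh⟩) else 0)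
            (x.out⁻¹ * g * x.out) := by
      intro g
      by_cases h : x.out⁻¹ * g * x.out ∈ Q
      · rw [hDf]; simp only [dif_pos h]
      · rw [hDf]; simp only [dif_neg h, map_zero, mul_zero, dif_neg h]
    rw [Finset.sum_congr rfl fun g _ => h2 g]
    have h3 : ∑ g : P, (fun h : P => if hh : h ∈ Q then α ⟨h, hh⟩ * (starRingEnd ℂ) (β ⟨h, hh⟩)
        else 0) (x.out⁻¹ * g * x.out)
        = ∑ g : P, (if hh : g ∈ Q then α ⟨g, hh⟩ * (starRingEnd ℂ) (β ⟨g, hh⟩) else 0) := by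
      refine Fintype.sum_equiv (MulAut.conj x.out⁻¹).toEquiv _ _ fun g => ?_
      have harg : (MulAut.conj x.out⁻¹).toEquiv g = x.out⁻¹ * g * x.out := by
        simp [MulAut.conj_apply]
      rw [harg]
    rw [h3]
    exact sum_dite_mem Q fun q => α q * (starRingEnd ℂ) (β q)
  rw [Finset.sum_comm, Finset.sum_congr rfl fun x _ => hx x, Finset.sum_const,
    Finset.card_univ]
  have hcardG : (Nat.card (GG p P Q) : ℂ)
      = (Nat.card (NN p P Q) : ℂ) * (Fintype.card T : ℂ) * (Nat.card ↥Q : ℂ) := by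
    have h4 : Nat.card (GG p P Q) = Nat.card (NN p P Q) * Nat.card P := by
      rw [Nat.card_congr (gEquiv p P Q), Nat.card_prod]
    have h5 : Nat.card P = Fintype.card T * Nat.card ↥Q := by
      rw [Subgroup.card_eq_card_quotient_mul_card_subgroup (s := Q)]
      congr 1
      rw [Nat.card_eq_fintype_card]
    rw [h4, h5]
    push_cast
    ring
  rw [hcardG, nsmul_eq_mul]
  have hN0 : (Nat.card (NN p P Q) : ℂ) ≠ 0 := by
    simp [Nat.card_eq_fintype_card, Fintype.card_ne_zero]
  have hT0 : (Fintype.card T : ℂ) ≠ 0 := by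
    simp [Fintype.card_ne_zero]
  have hQ0 : (Nat.card ↥Q : ℂ) ≠ 0 := by
    simp [Nat.card_eq_fintype_card, Fintype.card_ne_zero]
  field_simp

variable {p} in
lemma isChar_PhiChar [Finite P] (hp : p.Prime) {α : ↥Q → ℂ} (hα : IsChar ↥Q α) :
    IsChar (GG p P Q) (PhiChar p P Q α) := by
  classical
  obtain ⟨d, σ, hσ⟩ := hα
  letI : Fintype (P ⧸ Q) := Fintype.ofFinite _
  have hfun : PhiChar p P Q α =
      fun s => LinearMap.trace ℂ _ (indRep p P Q hp σ s) := by
    funext s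
    rw [show α = (fun q => LinearMap.trace ℂ (Fin d → ℂ) (σ q)) from funext hσ]
    exact (trace_indRep p P Q hp σ s).symm
  rw [hfun]
  exact isChar_of_rep (indRep p P Q hp σ)

variable {p} in
lemma isChar_inflate (χ : P → ℂ) (hχ : IsChar P χ) :
    IsChar (GG p P Q) (fun s => χ s.right) := by
  obtain ⟨m, ρ, hρ⟩ := hχ
  exact ⟨m, ρ.comp (SemidirectProduct.rightHom), fun s => hρ s.right⟩

variable {p} in
lemma cInner_inflate [NeZero p] [Finite P] (χ ξ : P → ℂ) :
    cInner (GG p P Q) (fun s => χ s.right) (fun s => ξ s.right) = cInner P χ ξ := by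
  classical
  letI : Fintype P := Fintype.ofFinite P
  letI : Fintype (P ⧸ Q) := Fintype.ofFinite _
  letI : Fintype (NN p P Q) := Fintype.ofFinite _
  letI : Fintype (GG p P Q) := Fintype.ofFinite _
  unfold cInner
  simp only [finsum_eq_sum_of_fintype]
  have hsumG : ∀ F : GG p P Q → ℂ,
      ∑ s : GG p P Q, F s = ∑ v : NN p P Q, ∑ g : P, F ⟨v, g⟩ := by
    intro F
    have he := Fintype.sum_equiv (gEquiv p P Q) F (fun q => F ⟨q.1, q.2⟩) (fun s => rfl)
    rw [he, Fintype.sum_prod_type]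
  rw [hsumG]
  have hcardG : (Nat.card (GG p P Q) : ℂ)
      = (Nat.card (NN p P Q) : ℂ) * (Nat.card P : ℂ) := by
    rw [Nat.card_congr (gEquiv p P Q), Nat.card_prod]
    push_cast
    ring
  rw [hcardG]
  show ((Nat.card (NN p P Q) : ℂ) * (Nat.card P : ℂ))⁻¹ *
      ∑ _v : NN p P Q, ∑ g : P, χ g * (starRingEnd ℂ) (ξ g) =
    ((Nat.card P : ℂ))⁻¹ * ∑ g : P, χ g * (starRingEnd ℂ) (ξ g)
  rw [Finset.sum_const, Finset.card_univ, nsmul_eq_mul, ← Nat.card_eq_fintype_card]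
  have hN0 : (Nat.card (NN p P Q) : ℂ) ≠ 0 := by
    simp [Nat.card_eq_fintype_card, Fintype.card_ne_zero]
  have hP0 : (Nat.card P : ℂ) ≠ 0 := by
    simp [Nat.card_eq_fintype_card, Fintype.card_ne_zero]
  field_simp

variable {p} in
lemma PhiChar_res [Finite P] {ψ : P → ℂ} (hψ : IsChar P ψ) (s : GG p P Q) :
    PhiChar p P Q (fun q : ↥Q => ψ (q : P)) s =
      ψ s.right * PhiChar p P Q (fun _ => 1) s := by
  classical
  letI : Fintype (P ⧸ Q) := Fintype.ofFinite _
  unfold PhiChar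
  simp only [finsum_eq_sum_of_fintype]
  rw [Finset.mul_sum]
  refine Finset.sum_congr rfl fun x _ => ?_
  by_cases h : x.out⁻¹ * s.right * x.out ∈ Q
  · rw [dif_pos h, dif_pos h]
    have hcls : ψ (x.out⁻¹ * s.right * x.out) = ψ s.right := isChar_conj hψ x.out s.right
    show eC p (s.left x) * ψ (x.out⁻¹ * s.right * x.out) = _
    rw [hcls]
    ring
  · rw [dif_neg h, dif_neg h, mul_zero]

variable {p} in
lemma PhiChar_sum [Finite P] {k : ℕ} (c : Fin k → ℂ) (γ : Fin k → (↥Q → ℂ)) (s : GG p P Q) :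
    PhiChar p P Q (fun q => ∑ i : Fin k, c i * γ i q) s =
      ∑ i : Fin k, c i * PhiChar p P Q (γ i) s := by
  classical
  letI : Fintype (P ⧸ Q) := Fintype.ofFinite _
  unfold PhiChar
  simp only [finsum_eq_sum_of_fintype, Finset.mul_sum]
  rw [Finset.sum_comm]
  refine Finset.sum_congr rfl fun x _ => ?_
  by_cases h : x.out⁻¹ * s.right * x.out ∈ Q
  · simp only [dif_pos h, Finset.mul_sum]
    refine Finset.sum_congr rfl fun i _ => ?_
    ring
  · simp only [dif_neg h, mul_zero, Finset.sum_const_zero]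

variable {p} in
lemma phi_recover [NeZero p] [Finite P] (hp : p.Prime) {α : ↥Q → ℂ} (hα : IsChar ↥Q α)
    (q : ↥Q) :
    ∑ᶠ v : NN p P Q, PhiChar p P Q α ⟨v, (q : P)⟩ *
        (starRingEnd ℂ) (eC p (v (QuotientGroup.mk (1 : P)))) =
      (Nat.card (NN p P Q) : ℂ) * α q := by
  classical
  letI : Fintype (P ⧸ Q) := Fintype.ofFinite _
  letI : Fintype (NN p P Q) := Fintype.ofFinite _
  set x0 : P ⧸ Q := QuotientGroup.mk (1 : P) with hx0def
  have hx0 : x0.out ∈ Q := by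
    have h1 : (QuotientGroup.mk (1 : P) : P ⧸ Q) = QuotientGroup.mk x0.out := by
      rw [QuotientGroup.out_eq']
    have h2 := QuotientGroup.eq.mp h1
    simpa using h2
  have hmem : x0.out⁻¹ * (q : P) * x0.out ∈ Q :=
    Q.mul_mem (Q.mul_mem (Q.inv_mem hx0) q.2) hx0
  set Dα : (P ⧸ Q) → ℂ := fun x =>
    if h : x.out⁻¹ * (q : P) * x.out ∈ Q then α ⟨x.out⁻¹ * (q : P) * x.out, h⟩ else 0 with hDα
  have hPhi : ∀ v : NN p P Q,
      PhiChar p P Q α ⟨v, (q : P)⟩ = ∑ x : P ⧸ Q, eC p (v x) * Dα x := by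
    intro v
    show ∑ᶠ x : P ⧸ Q, _ = _
    rw [finsum_eq_sum_of_fintype]
    refine Finset.sum_congr rfl fun x _ => ?_
    by_cases h : x.out⁻¹ * (q : P) * x.out ∈ Q
    · rw [dif_pos h, hDα]; simp only [dif_pos h]
    · rw [dif_neg h, hDα]; simp only [dif_neg h, mul_zero]
  have key' : ∀ x y : P ⧸ Q,
      (∑ v : NN p P Q, eC p (v x) * (starRingEnd ℂ) (eC p (v y)))
      = if x = y then (Nat.card (NN p P Q) : ℂ) else 0 := by
    intro x y
    rw [← finsum_eq_sum_of_fintype]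
    exact keySum P Q hp x y
  rw [finsum_eq_sum_of_fintype]
  calc ∑ v : NN p P Q, PhiChar p P Q α ⟨v, (q : P)⟩ * (starRingEnd ℂ) (eC p (v x0))
      = ∑ v : NN p P Q, ∑ x : P ⧸ Q, Dα x * (eC p (v x) * (starRingEnd ℂ) (eC p (v x0))) := by
        refine Finset.sum_congr rfl fun v _ => ?_
        rw [hPhi, Finset.sum_mul]
        refine Finset.sum_congr rfl fun x _ => ?_
        ring
    _ = ∑ x : P ⧸ Q, Dα x * ∑ v : NN p P Q, eC p (v x) * (starRingEnd ℂ) (eC p (v x0)) := by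
        rw [Finset.sum_comm]
        refine Finset.sum_congr rfl fun x _ => ?_
        rw [Finset.mul_sum]
    _ = ∑ x : P ⧸ Q, Dα x * (if x = x0 then (Nat.card (NN p P Q) : ℂ) else 0) := by
        refine Finset.sum_congr rfl fun x _ => ?_
        rw [key']
    _ = Dα x0 * (Nat.card (NN p P Q) : ℂ) := by
        rw [Finset.sum_eq_single x0]
        · rw [if_pos rfl]
        · intro y _ hy
          rw [if_neg hy, mul_zero]
        · intro hx
          exact absurd (Finset.mem_univ x0) hx
    _ = (Nat.card (NN p P Q) : ℂ) * α q := by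
        rw [hDα]
        simp only [dif_pos hmem]
        have hval : α ⟨x0.out⁻¹ * (q : P) * x0.out, hmem⟩ = α q := by
          have hsub : (⟨x0.out⁻¹ * (q : P) * x0.out, hmem⟩ : ↥Q)
              = (⟨x0.out, hx0⟩ : ↥Q)⁻¹ * q * ⟨x0.out, hx0⟩ := by
            apply Subtype.ext
            rfl
          rw [hsub, isChar_conj hα]
        rw [hval]
        ring

variable {p} in
lemma isPGroup_GG [Finite P] (hp : p.Prime) (hP : IsPGroup p P) :
    IsPGroup p (GG p P Q) := by
  haveI : NeZero p := ⟨hp.ne_zero⟩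
  haveI : Fact p.Prime := ⟨hp⟩
  classical
  letI : Fintype (P ⧸ Q) := Fintype.ofFinite _
  obtain ⟨m, hm⟩ := IsPGroup.iff_card.mp hP
  have hNN : Nat.card (NN p P Q) = p ^ (Nat.card (P ⧸ Q)) := by
    rw [Nat.card_pi]
    have : ∀ _x : P ⧸ Q, Nat.card (Multiplicative (ZMod p)) = p := fun _ => by
      rw [Nat.card_congr Multiplicative.toAdd, Nat.card_zmod]
    rw [Finset.prod_congr rfl fun x _ => this x, Finset.prod_const, Finset.card_univ,
      Nat.card_eq_fintype_card]
  refine IsPGroup.of_card (n := Nat.card (P ⧸ Q) + m) ?_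
  rw [Nat.card_congr (gEquiv p P Q), Nat.card_prod, hNN, hm, pow_add]

lemma isChar_one_Q : IsChar ↥Q (fun _ => 1) := by
  refine ⟨1, 1, fun q => ?_⟩
  have : ((1 : Representation ℂ ↥Q (Fin 1 → ℂ)) q) = LinearMap.id := rfl
  rw [this]
  rw [show (LinearMap.id : (Fin 1 → ℂ) →ₗ[ℂ] (Fin 1 → ℂ)) = 1 from rfl]
  rw [LinearMap.trace_one]
  simp

lemma cInner_one_one [Finite P] : cInner ↥Q (fun _ => 1) (fun _ => 1) = 1 := by
  classical
  letI : Fintype P := Fintype.ofFinite P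
  unfold cInner
  rw [finsum_eq_sum_of_fintype]
  simp only [map_one, mul_one]
  rw [Finset.sum_const, Finset.card_univ, nsmul_eq_mul, mul_one, ← Nat.card_eq_fintype_card]
  have hQ0 : (Nat.card ↥Q : ℂ) ≠ 0 := by
    simp [Nat.card_eq_fintype_card, Fintype.card_ne_zero]
  field_simp

end ThmB

/-- **Theorem B.**  Let `P` be a finite `p`-group, `Q < P` a proper subgroup
and `ψ ∈ Irr(P)`.  If the restriction `ψ_Q` decomposes as
`ψ_Q = ∑ i, n i • φ i` with the `φ i` pairwise distinct irreducible characters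
of `Q` and `n i = (ψ_Q, φ i) > 0`, then there is a finite `p`-group `G` with
irreducible characters `Ψ, Θ` such that `Ψ Θ = ∑ i, n i • Φ i` with the `Φ i`
pairwise distinct irreducible characters of `G` and `n i = (Ψ Θ, Φ i) > 0`. -/
theorem restriction_decomposition_to_product_decomposition
    (p : ℕ) (hp : p.Prime)
    (P : Type) [Group P] [Finite P] (hP : IsPGroup p P)
    (Q : Subgroup P) (hQ : Q < ⊤)
    (ψ : P → ℂ) (hψ : IsIrrChar P ψ)
    (k : ℕ) (hk : 0 < k)
    (φ : Fin k → (↥Q → ℂ)) (hφirr : ∀ i, IsIrrChar ↥Q (φ i))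
    (hφinj : Function.Injective φ)
    (n : Fin k → ℕ) (hn : ∀ i, 0 < n i)
    (hres : ∀ x : ↥Q, ψ (x : P) = ∑ i : Fin k, (n i : ℂ) * φ i x)
    (hmult : ∀ i : Fin k, cInner ↥Q (fun x : ↥Q => ψ (x : P)) (φ i) = (n i : ℂ)) :
    ∃ (G : Type) (_ : Group G) (_ : Finite G), IsPGroup p G ∧
      ∃ (Ψ Θ : G → ℂ) (Φ : Fin k → (G → ℂ)),
        IsIrrChar G Ψ ∧ IsIrrChar G Θ ∧
        (∀ i, IsIrrChar G (Φ i)) ∧ Function.Injective Φ ∧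
        (∀ g : G, Ψ g * Θ g = ∑ i : Fin k, (n i : ℂ) * Φ i g) ∧
        (∀ i : Fin k, cInner G (fun g => Ψ g * Θ g) (Φ i) = (n i : ℂ)) := by
  classical
  haveI : NeZero p := ⟨hp.ne_zero⟩
  refine ⟨ThmB.GG p P Q, inferInstance, inferInstance, ThmB.isPGroup_GG P Q hp hP, ?_⟩
  set Ψ : ThmB.GG p P Q → ℂ := fun s => ψ s.right with hΨdef
  set Θ : ThmB.GG p P Q → ℂ := ThmB.PhiChar p P Q (fun _ => 1) with hΘdef
  set Φf : Fin k → (ThmB.GG p P Q → ℂ) := fun i => ThmB.PhiChar p P Q (φ i) with hΦdef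
  have hprod : ∀ s : ThmB.GG p P Q, Ψ s * Θ s = ∑ i : Fin k, (n i : ℂ) * Φf i s := by
    intro s
    have hres' : (fun q : ↥Q => ψ (q : P)) = fun q : ↥Q => ∑ i : Fin k, (n i : ℂ) * φ i q :=
      funext hres
    calc Ψ s * Θ s = ThmB.PhiChar p P Q (fun q : ↥Q => ψ (q : P)) s :=
          (ThmB.PhiChar_res P Q hψ.1 s).symm
      _ = ThmB.PhiChar p P Q (fun q : ↥Q => ∑ i : Fin k, (n i : ℂ) * φ i q) s := by
          rw [hres']
      _ = ∑ i : Fin k, (n i : ℂ) * Φf i s :=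
          ThmB.PhiChar_sum P Q (fun i => (n i : ℂ)) φ s
  refine ⟨Ψ, Θ, Φf, ?_, ?_, ?_, ?_, hprod, ?_⟩
  · exact ⟨ThmB.isChar_inflate P Q ψ hψ.1, by
      rw [hΨdef, ThmB.cInner_inflate P Q ψ ψ]; exact hψ.2⟩
  · exact ⟨ThmB.isChar_PhiChar P Q hp (ThmB.isChar_one_Q P Q), by
      rw [hΘdef, ThmB.phi_isometry P Q hp]; exact ThmB.cInner_one_one P Q⟩
  · intro i
    exact ⟨ThmB.isChar_PhiChar P Q hp (hφirr i).1, by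
      rw [hΦdef, ThmB.phi_isometry P Q hp]; exact (hφirr i).2⟩
  · intro i j hij
    apply hφinj
    funext q
    have hN0 : (Nat.card (ThmB.NN p P Q) : ℂ) ≠ 0 := by
      have : 0 < Nat.card (ThmB.NN p P Q) := Nat.card_pos
      exact_mod_cast this.ne'
    have h1 := ThmB.phi_recover P Q hp (hφirr i).1 q
    have h2 := ThmB.phi_recover P Q hp (hφirr j).1 q
    have hij' : ThmB.PhiChar p P Q (φ i) = ThmB.PhiChar p P Q (φ j) := hij
    rw [hij'] at h1
    exact mul_left_cancel₀ hN0 (h1.symm.trans h2)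
  · intro i
    have hfun : (fun s => Ψ s * Θ s) = ThmB.PhiChar p P Q (fun q : ↥Q => ψ (q : P)) := by
      funext s
      exact (ThmB.PhiChar_res P Q hψ.1 s).symm
    rw [hfun, ThmB.phi_isometry P Q hp]
    exact hmult i
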